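/- For 2 < Ê < 4, the ratio of the maximum asymptotic randomness rate g₀(Ê) = (Ê−2)/2 to the single-trial conditional min-entropy H_min(Ê) = −log₂((6−Ê)/4) is strictly greater than 1, and its limit as Ê → 2⁺ equals 2·ln 2 ≈ 1.386. -/

import Mathlib

open Real Filter Set

/-- Key inequality: `exp (-(t * log 2)) < 1 - t/2` for `t ∈ (0,1)`,
by strict convexity of `exp` on the segment from `0` to `-log 2`. -/
lemma aux_exp_lt (t : ℝ) (ht0 : 0 < t) (ht1 : t < 1) :
    Real.exp (-(t * Real.log 2)) < 1 - t / 2 := by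
  have h := strictConvexOn_exp.2 (Set.mem_univ (0 : ℝ))
    (Set.mem_univ (-Real.log 2))
    (by
      have : Real.log 2 ≠ 0 := by positivity
      intro hc; apply this; linarith [hc]) (by linarith : (0:ℝ) < 1 - t) ht0
    (by ring)
  simp only [smul_eq_mul, mul_zero, zero_add, Real.exp_zero, mul_one] at h
  have h2 : Real.exp (-Real.log 2) = 1 / 2 := by
    rw [Real.exp_neg, Real.exp_log two_pos]; norm_num
  rw [h2] at h
  have heq : -(t * Real.log 2) = t * -Real.log 2 := by ring
  rw [heq]
  linarith

lemma aux_log_gt (E : ℝ) (h2 : 2 < E) (h4 : E < 4) :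
    -((E - 2) / 2 * Real.log 2) < Real.log ((6 - E) / 4) := by
  have hpos : (0:ℝ) < (6 - E) / 4 := by linarith
  rw [Real.lt_log_iff_exp_lt hpos]
  have := aux_exp_lt ((E - 2) / 2) (by linarith) (by linarith)
  calc Real.exp (-((E - 2) / 2 * Real.log 2)) < 1 - (E - 2) / 2 / 2 := this
    _ = (6 - E) / 4 := by ring

theorem rate_ratio_gt_one_and_limit :
    (∀ Ehat : ℝ, 2 < Ehat → Ehat < 4 →
      1 < ((Ehat - 2) / 2) / (-Real.logb 2 ((6 - Ehat) / 4))) ∧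
    Filter.Tendsto
      (fun Ehat : ℝ => ((Ehat - 2) / 2) / (-Real.logb 2 ((6 - Ehat) / 4)))
      (nhdsWithin 2 (Set.Ioi 2)) (nhds (2 * Real.log 2)) := by
  have hlog2 : (0:ℝ) < Real.log 2 := Real.log_pos one_lt_two
  constructor
  · intro E h2 h4
    have hu0 : (0:ℝ) < (6 - E) / 4 := by linarith
    have hu1 : (6 - E) / 4 < 1 := by linarith
    have hlneg : Real.log ((6 - E) / 4) < 0 := Real.log_neg hu0 hu1
    have hD : 0 < -Real.logb 2 ((6 - E) / 4) := by
      rw [Real.logb]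
      have : Real.log ((6 - E) / 4) / Real.log 2 < 0 := div_neg_of_neg_of_pos hlneg hlog2
      linarith
    rw [one_lt_div hD]
    have hkey := aux_log_gt E h2 h4
    rw [Real.logb, ← neg_div, div_lt_iff₀ hlog2]
    linarith
  · -- limit part
    have hderiv : HasDerivAt Real.log 1 1 := by
      simpa using Real.hasDerivAt_log one_ne_zero
    have hslope : Tendsto (slope Real.log 1) (nhdsWithin 1 {(1:ℝ)}ᶜ) (nhds 1) :=
      hasDerivAt_iff_tendsto_slope.mp hderiv
    have hu : Tendsto (fun E : ℝ => (6 - E) / 4) (nhdsWithin 2 (Set.Ioi 2))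
        (nhdsWithin 1 {(1:ℝ)}ᶜ) := by
      apply tendsto_nhdsWithin_of_tendsto_nhds_of_eventually_within
      · have h1 : Tendsto (fun E : ℝ => (6 - E) / 4) (nhds 2) (nhds 1) := by
          have hc : Continuous (fun E : ℝ => (6 - E) / 4) := by fun_prop
          have h2 := hc.tendsto 2
          norm_num at h2
          exact h2
        exact h1.mono_left nhdsWithin_le_nhds
      · filter_upwards [self_mem_nhdsWithin] with E hE
        simp only [Set.mem_compl_iff, Set.mem_singleton_iff]
        intro hc
        have hE2 : (2:ℝ) < E := hE
        have : (6 - E) = 4 := by linarith [(div_eq_one_iff_eq (by norm_num : (4:ℝ) ≠ 0)).mp hc]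
        linarith
    have hcomp : Tendsto (fun E : ℝ => slope Real.log 1 ((6 - E) / 4))
        (nhdsWithin 2 (Set.Ioi 2)) (nhds 1) := hslope.comp hu
    have hmain : Tendsto (fun E : ℝ => 2 * Real.log 2 / slope Real.log 1 ((6 - E) / 4))
        (nhdsWithin 2 (Set.Ioi 2)) (nhds (2 * Real.log 2)) := by
      have h3 := (tendsto_const_nhds (x := 2 * Real.log 2)
        (f := nhdsWithin 2 (Set.Ioi 2))).div hcomp one_ne_zero
      simp only [div_one] at h3
      exact h3
    apply hmain.congr'
    filter_upwards [self_mem_nhdsWithin] with E hE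
    have hE2 : (2:ℝ) < E := hE
    have hEne : E - 2 ≠ 0 := by linarith
    set s := slope Real.log 1 ((6 - E) / 4) with hs
    have hne : (6 - E) / 4 - 1 ≠ 0 := by
      intro hc; apply hEne; linarith
    have hslope_eq : Real.log ((6 - E) / 4) = s * ((6 - E) / 4 - 1) := by
      rw [hs, slope_def_field, Real.log_one, sub_zero, div_mul_cancel₀ _ hne]
    have hln2 : Real.log 2 ≠ 0 := ne_of_gt hlog2
    rw [Real.logb, hslope_eq]
    have hd : -(s * ((6 - E) / 4 - 1) / Real.log 2) = (E - 2) * s / (4 * Real.log 2) := by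
      field_simp; ring
    rw [hd]
    rcases eq_or_ne s 0 with hs0 | hs0
    · simp [hs0]
    · field_simp
      ring
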